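/- For every real u ≥ 0, (1+u)·log(1+u) − u ≥ (u²/2)/(1 + u/3). -/

import Mathlib

open Real Set

/-- Derivative of `log(1+x) - 2x/(x+2)`. -/
lemma fcl_hasDeriv_g (x : ℝ) (hx : 0 ≤ x) :
    HasDerivAt (fun x : ℝ => Real.log (1 + x) - 2 * x / (x + 2))
      (1 / (1 + x) - 4 / (x + 2) ^ 2) x := by
  have h1 : (1 : ℝ) + x ≠ 0 := by nlinarith
  have h2 : x + 2 ≠ 0 := by nlinarith
  have d1 : HasDerivAt (fun x : ℝ => Real.log (1 + x)) (1 / (1 + x)) x := by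
    have h : HasDerivAt (fun x : ℝ => 1 + x) 1 x := (hasDerivAt_id x).const_add 1
    simpa [Function.comp_def] using (Real.hasDerivAt_log h1).comp x h
  have d2 : HasDerivAt (fun x : ℝ => 2 * x / (x + 2)) (4 / (x + 2) ^ 2) x := by
    have dn : HasDerivAt (fun x : ℝ => 2 * x) 2 x := by
      simpa using (hasDerivAt_id x).const_mul 2
    have dd : HasDerivAt (fun x : ℝ => x + 2) 1 x := (hasDerivAt_id x).add_const 2
    have := dn.div dd h2
    refine this.congr_deriv ?_
    field_simp
    ring
  exact d1.sub d2

/-- `log(1+x) ≥ 2x/(x+2)` for `x ≥ 0`. -/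
lemma fcl_log_ge (x : ℝ) (hx : 0 ≤ x) : 2 * x / (x + 2) ≤ Real.log (1 + x) := by
  set g : ℝ → ℝ := fun x => Real.log (1 + x) - 2 * x / (x + 2) with hg
  have key : MonotoneOn g (Ici (0 : ℝ)) := by
    apply monotoneOn_of_deriv_nonneg (convex_Ici 0)
    · intro y hy
      exact ((fcl_hasDeriv_g y hy).continuousAt).continuousWithinAt
    · intro y hy
      rw [interior_Ici] at hy
      exact ((fcl_hasDeriv_g y (le_of_lt hy)).differentiableAt).differentiableWithinAt
    · intro y hy
      rw [interior_Ici] at hy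
      have hy' : 0 ≤ y := le_of_lt hy
      rw [(fcl_hasDeriv_g y hy').deriv]
      have h1 : (0:ℝ) < 1 + y := by nlinarith
      have h2 : (0:ℝ) < (y + 2) ^ 2 := by nlinarith
      rw [sub_nonneg, div_le_div_iff₀ h2 h1]
      nlinarith
  have h0 : g 0 = 0 := by simp [hg]
  have := key (self_mem_Ici) (mem_Ici.mpr hx) hx
  rw [h0] at this
  simpa [hg, sub_nonneg] using this

/-- Derivative of the main function. -/
lemma fcl_hasDeriv_f (x : ℝ) (hx : 0 ≤ x) :
    HasDerivAt (fun x : ℝ => (1 + x) * Real.log (1 + x) - x - (x ^ 2 / 2) / (1 + x / 3))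
      (Real.log (1 + x) - (x + x ^ 2 / 6) / (1 + x / 3) ^ 2) x := by
  have h1 : (1 : ℝ) + x ≠ 0 := by nlinarith
  have h3 : (1 : ℝ) + x / 3 ≠ 0 := by nlinarith
  have dlog : HasDerivAt (fun x : ℝ => Real.log (1 + x)) (1 / (1 + x)) x := by
    have h : HasDerivAt (fun x : ℝ => 1 + x) 1 x := (hasDerivAt_id x).const_add 1
    simpa [Function.comp_def] using (Real.hasDerivAt_log h1).comp x h
  have d1 : HasDerivAt (fun x : ℝ => (1 + x) * Real.log (1 + x))
      (Real.log (1 + x) + 1) x := by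
    have ha : HasDerivAt (fun x : ℝ => 1 + x) 1 x := (hasDerivAt_id x).const_add 1
    have := ha.mul dlog
    refine this.congr_deriv ?_
    field_simp
  have d2 : HasDerivAt (fun x : ℝ => x) 1 x := hasDerivAt_id x
  have d3 : HasDerivAt (fun x : ℝ => (x ^ 2 / 2) / (1 + x / 3))
      ((x + x ^ 2 / 6) / (1 + x / 3) ^ 2) x := by
    have dn : HasDerivAt (fun x : ℝ => x ^ 2 / 2) x x := by
      have := (hasDerivAt_pow 2 x).div_const 2
      simpa using this
    have dd : HasDerivAt (fun x : ℝ => 1 + x / 3) (1 / 3) x := by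
      have := ((hasDerivAt_id x).div_const 3).const_add 1
      simpa using this
    have := dn.div dd h3
    refine this.congr_deriv ?_
    field_simp
    ring
  have := (d1.sub d2).sub d3
  refine this.congr_deriv ?_
  ring

/-- For every real `u ≥ 0`,
`(1+u)·log(1+u) − u ≥ (u²/2)/(1 + u/3)`. -/
theorem freedman_calculus_lemma (u : ℝ) (hu : 0 ≤ u) :
    (1 + u) * Real.log (1 + u) - u ≥ (u ^ 2 / 2) / (1 + u / 3) := by
  set f : ℝ → ℝ := fun x => (1 + x) * Real.log (1 + x) - x - (x ^ 2 / 2) / (1 + x / 3)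
    with hf
  have key : MonotoneOn f (Ici (0 : ℝ)) := by
    apply monotoneOn_of_deriv_nonneg (convex_Ici 0)
    · intro y hy
      exact ((fcl_hasDeriv_f y hy).continuousAt).continuousWithinAt
    · intro y hy
      rw [interior_Ici] at hy
      exact ((fcl_hasDeriv_f y (le_of_lt hy)).differentiableAt).differentiableWithinAt
    · intro y hy
      rw [interior_Ici] at hy
      have hy' : 0 ≤ y := le_of_lt hy
      rw [(fcl_hasDeriv_f y hy').deriv]
      have hlog := fcl_log_ge y hy'
      have h2 : (0:ℝ) < y + 2 := by nlinarith
      have h3 : (0:ℝ) < (1 + y / 3) ^ 2 := by nlinarith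
      have hq : (y + y ^ 2 / 6) / (1 + y / 3) ^ 2 ≤ 2 * y / (y + 2) := by
        rw [div_le_div_iff₀ h3 h2]
        nlinarith [pow_nonneg hy' 3]
      linarith
  have h0 : f 0 = 0 := by simp [hf]
  have := key (self_mem_Ici) (mem_Ici.mpr hu) hu
  rw [h0] at this
  have : (u ^ 2 / 2) / (1 + u / 3) ≤ (1 + u) * Real.log (1 + u) - u := by
    have := this
    simp only [hf] at this
    linarith
  exact this
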